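/- Let m ≥ 2 be an integer, let p₁ : ℝ → ℝ be 2π-periodic and C³, and let u₁ : ℝ → ℝ be 2π-periodic and continuous, and set P₁ := 1 + ε p₁, U₁(t) := t + ε u₁(t), U₁⁺(t) := U₁(t + 2π/m). Then, uniformly in t ∈ ℝ as ε → 0⁺: 2 · L_{P₁}(U₁(t), U₁⁺(t)) · ∂₁L_{P₁}(U₁(t), U₁⁺(t)) = −2 sin(2π/m) + 2ε [ p₁'(t) − p₁'(t + 2π/m) cos(2π/m) + ( u₁(t) − u₁(t + 2π/m) ) cos(2π/m) − ( p₁(t + 2π/m) + p₁(t) + p₁''(t) ) sin(2π/m) ] + O(ε²). -/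

import Mathlib

open Real

/-- The generating function `L_p(t,t')` of the billiard in the convex domain
with support function `p`. -/
noncomputable def genfun (p : ℝ → ℝ) (t t' : ℝ) : ℝ :=
  Real.sqrt (p t ^ 2 + deriv p t ^ 2 + p t' ^ 2 + deriv p t' ^ 2
    - 2 * p t * p t' * Real.cos (t - t')
    - 2 * p t * deriv p t' * Real.sin (t - t')
    + 2 * deriv p t * p t' * Real.sin (t - t')
    - 2 * deriv p t * deriv p t' * Real.cos (t - t'))

lemma mylip (f : ℝ → ℝ) (hf : Differentiable ℝ f) {M : ℝ} (hM : ∀ x, |deriv f x| ≤ M)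
    (x y : ℝ) : |f x - f y| ≤ M * |x - y| := by
  have := Convex.norm_image_sub_le_of_norm_deriv_le (s := Set.univ)
    (fun z _ => (hf z)) (fun z _ => by simpa [Real.norm_eq_abs] using hM z)
    convex_univ (Set.mem_univ y) (Set.mem_univ x)
  simpa [Real.norm_eq_abs] using this

lemma myperiodic_deriv {f : ℝ → ℝ} {c : ℝ} (hf : ∀ x, f (x + c) = f x) :
    ∀ x, deriv f (x + c) = deriv f x := by
  intro x
  rw [← deriv_comp_add_const]
  exact congrFun (congrArg deriv (funext hf)) x

lemma mybdd (f : ℝ → ℝ) (hf : Continuous f) (hper : ∀ x, f (x + 2 * π) = f x) :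
    ∃ M, 0 ≤ M ∧ ∀ x, |f x| ≤ M := by
  obtain ⟨B, hB⟩ := (isCompact_Icc (a := (0:ℝ)) (b := 2 * π)).exists_bound_of_continuousOn
    hf.continuousOn
  refine ⟨max B 0, le_max_right _ _, fun x => ?_⟩
  obtain ⟨y, hy, hxy⟩ := (Function.Periodic.exists_mem_Ico₀ (hper : Function.Periodic f (2*π))
    (by positivity) x)
  rw [hxy]
  calc |f y| ≤ B := by simpa [Real.norm_eq_abs] using hB y ⟨hy.1, hy.2.le⟩
    _ ≤ max B 0 := le_max_left _ _

lemma myabsmul {x y X Y : ℝ} (hx : |x| ≤ X) (hy : |y| ≤ Y) : |x * y| ≤ X * Y := by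
  rw [abs_mul]
  exact mul_le_mul hx hy (abs_nonneg _) ((abs_nonneg x).trans hx)


lemma mysinlip (x y : ℝ) : |Real.sin x - Real.sin y| ≤ |x - y| := by
  rw [Real.sin_sub_sin]
  have h1 : |Real.sin ((x - y) / 2)| ≤ |(x - y) / 2| := Real.abs_sin_le_abs
  have h2 : |Real.cos ((x + y) / 2)| ≤ 1 := Real.abs_cos_le_one _
  rw [abs_mul, abs_mul, abs_two]
  rw [abs_div, abs_two] at h1
  nlinarith [abs_nonneg (Real.sin ((x - y) / 2)), abs_nonneg (x - y),
    abs_nonneg (Real.cos ((x + y) / 2))]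

lemma mycoslip (x y : ℝ) : |Real.cos x - Real.cos y| ≤ |x - y| := by
  rw [Real.cos_sub_cos]
  have h1 : |Real.sin ((x - y) / 2)| ≤ |(x - y) / 2| := Real.abs_sin_le_abs
  have h2 : |Real.sin ((x + y) / 2)| ≤ 1 := Real.abs_sin_le_one _
  rw [abs_mul, abs_mul, abs_neg, abs_two]
  rw [abs_div, abs_two] at h1
  nlinarith [abs_nonneg (Real.sin ((x - y) / 2)), abs_nonneg (x - y),
    abs_nonneg (Real.sin ((x + y) / 2))]

lemma mycos1 (h : ℝ) : |Real.cos h - 1| ≤ h ^ 2 / 2 := by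
  have e1 := Real.cos_two_mul (h / 2)
  have e2 := Real.cos_sq' (h / 2)
  rw [show 2 * (h / 2) = h by ring] at e1
  have h1 : Real.cos h = 1 - 2 * Real.sin (h / 2) ^ 2 := by linarith
  have h2 : Real.sin (h / 2) ^ 2 ≤ (h / 2) ^ 2 := Real.sin_sq_le_sq
  rw [h1, show (1 - 2 * Real.sin (h / 2) ^ 2 - 1) = -(2 * Real.sin (h / 2) ^ 2) by ring,
    abs_neg, abs_of_nonneg (by positivity)]
  nlinarith

lemma mysinid (h : ℝ) (hh : |h| ≤ 1) : |Real.sin h - h| ≤ h ^ 2 / 2 := by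
  have key : ∀ y ∈ Set.Icc (-|h|) |h|,
      HasDerivWithinAt (fun y => Real.sin y - y) (Real.cos y - 1) (Set.Icc (-|h|) |h|) y :=
    fun y _ => ((Real.hasDerivAt_sin y).sub (hasDerivAt_id y)).hasDerivWithinAt
  have bound : ∀ y ∈ Set.Icc (-|h|) |h|, ‖Real.cos y - 1‖ ≤ h ^ 2 / 2 := by
    intro y hy
    have h1 := mycos1 y
    have h2 : y ^ 2 ≤ h ^ 2 := by
      have := sq_le_sq' hy.1 hy.2
      rwa [sq_abs] at this
    simpa [Real.norm_eq_abs] using h1.trans (by linarith)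
  have mem0 : (0:ℝ) ∈ Set.Icc (-|h|) |h| := ⟨by simp [abs_nonneg], abs_nonneg h⟩
  have memh : h ∈ Set.Icc (-|h|) |h| := ⟨neg_abs_le h, le_abs_self h⟩
  have := Convex.norm_image_sub_le_of_norm_hasDerivWithin_le key bound
    (convex_Icc _ _) mem0 memh
  simp only [Real.norm_eq_abs, Real.sin_zero, sub_zero] at this
  calc |Real.sin h - h| ≤ h ^ 2 / 2 * |h| := this
    _ ≤ h ^ 2 / 2 := by nlinarith [sq_nonneg h, abs_nonneg h]

lemma mytaylor (x h : ℝ) (hh : |h| ≤ 1) :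
    |Real.sin (x + h) - Real.sin x - h * Real.cos x| ≤ h ^ 2 := by
  have e : Real.sin (x + h) - Real.sin x - h * Real.cos x
      = Real.sin x * (Real.cos h - 1) + Real.cos x * (Real.sin h - h) := by
    rw [Real.sin_add]; ring
  rw [e]
  calc |Real.sin x * (Real.cos h - 1) + Real.cos x * (Real.sin h - h)|
      ≤ |Real.sin x * (Real.cos h - 1)| + |Real.cos x * (Real.sin h - h)| := abs_add_le _ _
    _ ≤ 1 * (h ^ 2 / 2) + 1 * (h ^ 2 / 2) := by
        gcongr
        · exact (abs_mul _ _).le.trans (by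
            have := mycos1 h
            nlinarith [Real.abs_sin_le_one x, abs_nonneg (Real.cos h - 1)])
        · exact (abs_mul _ _).le.trans (by
            have := mysinid h hh
            nlinarith [Real.abs_cos_le_one x, abs_nonneg (Real.sin h - h)])
    _ = h ^ 2 := by ring

lemma myhasDerivF (f g : ℝ → ℝ) (f' g' : ℝ) (s y K3 K4 : ℝ)
    (hf : HasDerivAt f f' s) (hg : HasDerivAt g g' s) :
    HasDerivAt (fun x => f x ^ 2 + g x ^ 2 + K3 ^ 2 + K4 ^ 2
        - 2 * f x * K3 * Real.cos (x - y)
        - 2 * f x * K4 * Real.sin (x - y)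
        + 2 * g x * K3 * Real.sin (x - y)
        - 2 * g x * K4 * Real.cos (x - y))
      (2 * f s * f' + 2 * g s * g'
        - 2 * f' * K3 * Real.cos (s - y) + 2 * f s * K3 * Real.sin (s - y)
        - 2 * f' * K4 * Real.sin (s - y) - 2 * f s * K4 * Real.cos (s - y)
        + 2 * g' * K3 * Real.sin (s - y) + 2 * g s * K3 * Real.cos (s - y)
        - 2 * g' * K4 * Real.cos (s - y) + 2 * g s * K4 * Real.sin (s - y)) s := by
  have hid : HasDerivAt (fun x : ℝ => x - y) 1 s := (hasDerivAt_id s).sub_const y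
  have hc : HasDerivAt (fun x => Real.cos (x - y)) (-Real.sin (s - y)) s := by
    simpa [Function.comp_def] using (Real.hasDerivAt_cos (s - y)).comp s hid
  have hs' : HasDerivAt (fun x => Real.sin (x - y)) (Real.cos (s - y)) s := by
    simpa [Function.comp_def] using (Real.hasDerivAt_sin (s - y)).comp s hid
  have H5 : HasDerivAt (fun x => 2 * f x * K3 * Real.cos (x - y))
      ((2 * f' * K3) * Real.cos (s - y) + (2 * f s * K3) * (-Real.sin (s - y))) s :=
    ((hf.const_mul 2).mul_const K3).mul hc
  have H6 : HasDerivAt (fun x => 2 * f x * K4 * Real.sin (x - y))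
      ((2 * f' * K4) * Real.sin (s - y) + (2 * f s * K4) * Real.cos (s - y)) s :=
    ((hf.const_mul 2).mul_const K4).mul hs'
  have H7 : HasDerivAt (fun x => 2 * g x * K3 * Real.sin (x - y))
      ((2 * g' * K3) * Real.sin (s - y) + (2 * g s * K3) * Real.cos (s - y)) s :=
    ((hg.const_mul 2).mul_const K3).mul hs'
  have H8 : HasDerivAt (fun x => 2 * g x * K4 * Real.cos (x - y))
      ((2 * g' * K4) * Real.cos (s - y) + (2 * g s * K4) * (-Real.sin (s - y))) s :=
    ((hg.const_mul 2).mul_const K4).mul hc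
  have H12 : HasDerivAt (fun x => f x ^ 2 + g x ^ 2 + K3 ^ 2 + K4 ^ 2)
      (2 * f s ^ 1 * f' + 2 * g s ^ 1 * g') s := by
    simpa using ((((hf.pow 2).add (hg.pow 2)).add_const (K3 ^ 2)).add_const (K4 ^ 2))
  have Htot := (((H12.sub H5).sub H6).add H7).sub H8
  refine Htot.congr_deriv ?_
  ring


set_option maxHeartbeats 4000000 in
/-- First-order expansion of `2·L_{P₁}·∂₁L_{P₁}` along the perturbed circle:
with `P₁ = 1 + εp₁`, `U₁(t) = t + εu₁(t)`, `U₁⁺(t) = U₁(t + 2π/m)`,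
`2 L_{P₁}(U₁(t),U₁⁺(t)) ∂₁L_{P₁}(U₁(t),U₁⁺(t)) = −2 sin(2π/m) + 2ε[...] + O(ε²)`
uniformly in `t`. -/
theorem stmt_8 (m : ℕ) (hm : 2 ≤ m) (p₁ u₁ : ℝ → ℝ)
    (hp : ContDiff ℝ 3 p₁) (hpper : ∀ t, p₁ (t + 2 * π) = p₁ t)
    (hu : Continuous u₁) (huper : ∀ t, u₁ (t + 2 * π) = u₁ t) :
    ∃ C > 0, ∃ ε₁ > 0, ∀ ε : ℝ, 0 ≤ ε → ε ≤ ε₁ → ∀ t : ℝ,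
      |2 * genfun (fun s => 1 + ε * p₁ s) (t + ε * u₁ t)
            ((t + 2 * π / m) + ε * u₁ (t + 2 * π / m))
          * deriv (fun s => genfun (fun s' => 1 + ε * p₁ s') s
              ((t + 2 * π / m) + ε * u₁ (t + 2 * π / m))) (t + ε * u₁ t)
        - (-2 * Real.sin (2 * π / m)
            + 2 * ε * (deriv p₁ t - deriv p₁ (t + 2 * π / m) * Real.cos (2 * π / m)
              + (u₁ t - u₁ (t + 2 * π / m)) * Real.cos (2 * π / m)
              - (p₁ (t + 2 * π / m) + p₁ t + deriv (deriv p₁) t) * Real.sin (2 * π / m)))|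
        ≤ C * ε ^ 2 := by
  have hπ := Real.pi_pos
  have hm0 : (0:ℝ) < (m:ℝ) := by
    have : (2:ℝ) ≤ (m:ℝ) := by exact_mod_cast hm
    linarith
  have hm2 : (2:ℝ) ≤ (m:ℝ) := by exact_mod_cast hm
  set δ : ℝ := 2 * π / m with hδdef
  clear_value δ
  have hδpos : 0 < δ := by rw [hδdef]; positivity
  have hδle : δ ≤ π := by
    rw [hδdef, div_le_iff₀ hm0]
    nlinarith
  have hcosδ : Real.cos δ < 1 := by
    have e1 := Real.cos_two_mul (δ / 2)
    have e2 := Real.cos_sq' (δ / 2)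
    rw [show 2 * (δ / 2) = δ by ring] at e1
    have hsin : 0 < Real.sin (δ / 2) :=
      Real.sin_pos_of_pos_of_lt_pi (by linarith) (by linarith)
    nlinarith
  -- smoothness of p₁ and its derivatives
  have hp1 : Differentiable ℝ p₁ := hp.differentiable (by norm_num)
  have hp' : ContDiff ℝ (2 + 1 : ℕ) p₁ := by exact_mod_cast hp
  have hd1 : ContDiff ℝ 2 (deriv p₁) := by
    have := (contDiff_succ_iff_deriv.mp (by exact_mod_cast hp' : ContDiff ℝ ((2:ℕ) + 1) p₁)).2.2
    exact_mod_cast this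
  have hdiff1 : Differentiable ℝ (deriv p₁) := hd1.differentiable (by norm_num)
  have hd2 : ContDiff ℝ 1 (deriv (deriv p₁)) := by
    have := (contDiff_succ_iff_deriv.mp (by exact_mod_cast hd1 : ContDiff ℝ ((1:ℕ) + 1) (deriv p₁))).2.2
    exact_mod_cast this
  have hdiff2 : Differentiable ℝ (deriv (deriv p₁)) := hd2.differentiable (by norm_num)
  have hcont3 : Continuous (deriv (deriv (deriv p₁))) := (contDiff_one_iff_deriv.mp hd2).2
  -- periodicity of derivatives
  have per1 : ∀ x, deriv p₁ (x + 2 * π) = deriv p₁ x := myperiodic_deriv hpper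
  have per2 : ∀ x, deriv (deriv p₁) (x + 2 * π) = deriv (deriv p₁) x := myperiodic_deriv per1
  have per3 : ∀ x, deriv (deriv (deriv p₁)) (x + 2 * π) = deriv (deriv (deriv p₁)) x :=
    myperiodic_deriv per2
  -- uniform bounds
  obtain ⟨M0, hM0n, hB0⟩ := mybdd p₁ hp.continuous hpper
  obtain ⟨M1, hM1n, hB1⟩ := mybdd (deriv p₁) hd1.continuous per1
  obtain ⟨M2, hM2n, hB2⟩ := mybdd (deriv (deriv p₁)) hd2.continuous per2
  obtain ⟨M3, hM3n, hB3⟩ := mybdd (deriv (deriv (deriv p₁))) hcont3 per3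
  obtain ⟨M4, hM4n, hB4⟩ := mybdd u₁ hu huper
  set M : ℝ := 1 + M0 + M1 + M2 + M3 + M4 with hMdef
  clear_value M
  have hM1 : 1 ≤ M := by simp only [hMdef]; linarith
  have hMpos : 0 < M := by linarith
  have hBp : ∀ x, |p₁ x| ≤ M := fun x => (hB0 x).trans (by simp only [hMdef]; linarith)
  have hBp' : ∀ x, |deriv p₁ x| ≤ M := fun x => (hB1 x).trans (by simp only [hMdef]; linarith)
  have hBp'' : ∀ x, |deriv (deriv p₁) x| ≤ M := fun x => (hB2 x).trans (by simp only [hMdef]; linarith)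
  have hBp''' : ∀ x, |deriv (deriv (deriv p₁)) x| ≤ M :=
    fun x => (hB3 x).trans (by simp only [hMdef]; linarith)
  have hBu : ∀ x, |u₁ x| ≤ M := fun x => (hB4 x).trans (by simp only [hMdef]; linarith)
  have hcpos : 0 < 1 - Real.cos δ := by linarith
  refine ⟨50 * M ^ 2, by positivity,
    min (1 / (2 * M)) ((1 - Real.cos δ) / (14 * M ^ 2)),
    lt_min (by positivity) (by positivity), fun ε hε0 hε1 t => ?_⟩
  have hεa : ε ≤ 1 / (2 * M) := hε1.trans (min_le_left _ _)
  have hεb : ε ≤ (1 - Real.cos δ) / (14 * M ^ 2) := hε1.trans (min_le_right _ _)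
  have hεM : ε * M ≤ 1 / 2 := by
    rw [le_div_iff₀ (by positivity)] at hεa
    nlinarith
  have hεle1 : ε ≤ 1 := by
    nlinarith [mul_nonneg hε0 (by linarith : (0:ℝ) ≤ M - 1)]
  have h14 : 14 * M ^ 2 * ε ≤ 1 - Real.cos δ := by
    rw [le_div_iff₀ (by positivity)] at hεb
    nlinarith
  -- abbreviations
  set v : ℝ := u₁ t with hvdef
  set w : ℝ := u₁ (t + δ) with hwdef
  set s : ℝ := t + ε * v with hsdef
  set s' : ℝ := t + δ + ε * w with hs'def
  clear_value v w s s'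
  have hvM : |v| ≤ M := by rw [hvdef]; exact hBu t
  have hwM : |w| ≤ M := by rw [hwdef]; exact hBu (t + δ)
  have hvw : |v - w| ≤ 2 * M := (abs_sub _ _).trans (by linarith)
  have hds : s - s' = -δ + ε * (v - w) := by rw [hsdef, hs'def]; ring
  have hεvw : |ε * (v - w)| ≤ 2 * (M * ε) := by
    rw [abs_mul, abs_of_nonneg hε0]
    linarith only [mul_le_mul_of_nonneg_left hvw hε0]
  -- derivative of the support function
  have hP : deriv (fun x => 1 + ε * p₁ x) = fun x => ε * deriv p₁ x := by
    funext x
    exact ((((hp1 x).hasDerivAt).const_mul ε).const_add 1).deriv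
  -- the squared-distance function
  have hgfun : (fun x => genfun (fun z => 1 + ε * p₁ z) x s')
      = fun x => Real.sqrt ((1 + ε * p₁ x) ^ 2 + (ε * deriv p₁ x) ^ 2 + (1 + ε * p₁ s') ^ 2 + (ε * deriv p₁ s') ^ 2 - 2 * (1 + ε * p₁ x) * (1 + ε * p₁ s') * Real.cos (x - s') - 2 * (1 + ε * p₁ x) * (ε * deriv p₁ s') * Real.sin (x - s') + 2 * (ε * deriv p₁ x) * (1 + ε * p₁ s') * Real.sin (x - s') - 2 * (ε * deriv p₁ x) * (ε * deriv p₁ s') * Real.cos (x - s')) := by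
    funext x
    simp only [genfun, hP]
  have hgf1 : genfun (fun z => 1 + ε * p₁ z) s s' = Real.sqrt ((1 + ε * p₁ s) ^ 2 + (ε * deriv p₁ s) ^ 2 + (1 + ε * p₁ s') ^ 2 + (ε * deriv p₁ s') ^ 2 - 2 * (1 + ε * p₁ s) * (1 + ε * p₁ s') * Real.cos (s - s') - 2 * (1 + ε * p₁ s) * (ε * deriv p₁ s') * Real.sin (s - s') + 2 * (ε * deriv p₁ s) * (1 + ε * p₁ s') * Real.sin (s - s') - 2 * (ε * deriv p₁ s) * (ε * deriv p₁ s') * Real.cos (s - s')) := by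
    simp only [genfun, hP]
  -- bounds on trig differences
  have hC0 : |Real.cos (s - s') - Real.cos δ| ≤ 2 * (M * ε) := by
    have h := mycoslip (s - s') (-δ)
    rw [Real.cos_neg, show s - s' - -δ = ε * (v - w) by rw [hds]; ring] at h
    exact h.trans hεvw
  have hS0 : |Real.sin (s - s') - -Real.sin δ| ≤ 2 * (M * ε) := by
    have h := mysinlip (s - s') (-δ)
    rw [Real.sin_neg, show s - s' - -δ = ε * (v - w) by rw [hds]; ring] at h
    exact h.trans hεvw
  have hS1 : |Real.sin (s - s')| ≤ 1 := Real.abs_sin_le_one _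
  have hC1 : |Real.cos (s - s')| ≤ 1 := Real.abs_cos_le_one _
  -- positivity of the squared distance
  have hQpos : 0 < (1 + ε * p₁ s) ^ 2 + (ε * deriv p₁ s) ^ 2 + (1 + ε * p₁ s') ^ 2 + (ε * deriv p₁ s') ^ 2 - 2 * (1 + ε * p₁ s) * (1 + ε * p₁ s') * Real.cos (s - s') - 2 * (1 + ε * p₁ s) * (ε * deriv p₁ s') * Real.sin (s - s') + 2 * (ε * deriv p₁ s) * (1 + ε * p₁ s') * Real.sin (s - s') - 2 * (ε * deriv p₁ s) * (ε * deriv p₁ s') * Real.cos (s - s') := by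
    have py := Real.sin_sq_add_cos_sq (s - s')
    have hQeq : (1 + ε * p₁ s) ^ 2 + (ε * deriv p₁ s) ^ 2 + (1 + ε * p₁ s') ^ 2 + (ε * deriv p₁ s') ^ 2 - 2 * (1 + ε * p₁ s) * (1 + ε * p₁ s') * Real.cos (s - s') - 2 * (1 + ε * p₁ s) * (ε * deriv p₁ s') * Real.sin (s - s') + 2 * (ε * deriv p₁ s) * (1 + ε * p₁ s') * Real.sin (s - s') - 2 * (ε * deriv p₁ s) * (ε * deriv p₁ s') * Real.cos (s - s') = (1 + ε * p₁ s - ((1 + ε * p₁ s') * Real.cos (s - s') + ε * deriv p₁ s' * Real.sin (s - s'))) ^ 2 + (ε * deriv p₁ s + (1 + ε * p₁ s') * Real.sin (s - s') - ε * deriv p₁ s' * Real.cos (s - s')) ^ 2 := by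
      linear_combination (-((1 + ε * p₁ s') ^ 2 + (ε * deriv p₁ s') ^ 2)) * py
    have h1 : |p₁ s - p₁ s' * Real.cos (s - s') - deriv p₁ s' * Real.sin (s - s')| ≤ 3 * M := by
      have i1 : |p₁ s' * Real.cos (s - s')| ≤ M * 1 := myabsmul (hBp s') hC1
      have i2 : |deriv p₁ s' * Real.sin (s - s')| ≤ M * 1 := myabsmul (hBp' s') hS1
      calc |p₁ s - p₁ s' * Real.cos (s - s') - deriv p₁ s' * Real.sin (s - s')|
          ≤ |p₁ s - p₁ s' * Real.cos (s - s')| + |deriv p₁ s' * Real.sin (s - s')| :=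
            abs_sub _ _
        _ ≤ (|p₁ s| + |p₁ s' * Real.cos (s - s')|) + |deriv p₁ s' * Real.sin (s - s')| := by
            gcongr
            exact abs_sub _ _
        _ ≤ 3 * M := by
            have h3 := hBp s
            linarith only [h3, i1, i2]
    have h2 : Real.cos (s - s') ≤ Real.cos δ + 2 * (M * ε) := by
      have := (abs_le.mp hC0).2
      linarith
    have e2 : 0 ≤ (M - 1) * (M * ε) := mul_nonneg (by linarith) (by positivity)
    have k2 : M * ε ≤ M ^ 2 * ε := by linarith only [e2]
    have k1 := mul_le_mul_of_nonneg_left (abs_le.mp h1).1 hε0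
    have huu : 0 < (1 + ε * p₁ s - ((1 + ε * p₁ s') * Real.cos (s - s') + ε * deriv p₁ s' * Real.sin (s - s'))) := by
      rw [show (1 + ε * p₁ s - ((1 + ε * p₁ s') * Real.cos (s - s') + ε * deriv p₁ s' * Real.sin (s - s')))
          = (1 - Real.cos (s - s')) + ε * (p₁ s - p₁ s' * Real.cos (s - s')
            - deriv p₁ s' * Real.sin (s - s')) from by ring]
      linarith only [k1, h2, h14, k2, hcpos, hε0]
    rw [hQeq]
    have huu2 := pow_pos huu 2
    linarith only [huu2, sq_nonneg (ε * deriv p₁ s + (1 + ε * p₁ s') * Real.sin (s - s') - ε * deriv p₁ s' * Real.cos (s - s'))]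
  have hQne : (1 + ε * p₁ s) ^ 2 + (ε * deriv p₁ s) ^ 2 + (1 + ε * p₁ s') ^ 2 + (ε * deriv p₁ s') ^ 2 - 2 * (1 + ε * p₁ s) * (1 + ε * p₁ s') * Real.cos (s - s') - 2 * (1 + ε * p₁ s) * (ε * deriv p₁ s') * Real.sin (s - s') + 2 * (ε * deriv p₁ s) * (1 + ε * p₁ s') * Real.sin (s - s') - 2 * (ε * deriv p₁ s) * (ε * deriv p₁ s') * Real.cos (s - s') ≠ 0 := ne_of_gt hQpos
  -- derivative of the squared distance
  have hf : HasDerivAt (fun x => 1 + ε * p₁ x) (ε * deriv p₁ s) s :=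
    (((hp1 s).hasDerivAt).const_mul ε).const_add 1
  have hg : HasDerivAt (fun x => ε * deriv p₁ x) (ε * deriv (deriv p₁) s) s :=
    ((hdiff1 s).hasDerivAt).const_mul ε
  have hBD : HasDerivAt (fun x => (1 + ε * p₁ x) ^ 2 + (ε * deriv p₁ x) ^ 2 + (1 + ε * p₁ s') ^ 2 + (ε * deriv p₁ s') ^ 2 - 2 * (1 + ε * p₁ x) * (1 + ε * p₁ s') * Real.cos (x - s') - 2 * (1 + ε * p₁ x) * (ε * deriv p₁ s') * Real.sin (x - s') + 2 * (ε * deriv p₁ x) * (1 + ε * p₁ s') * Real.sin (x - s') - 2 * (ε * deriv p₁ x) * (ε * deriv p₁ s') * Real.cos (x - s')) (2 * (1 + ε * p₁ s) * (ε * deriv p₁ s) + 2 * (ε * deriv p₁ s) * (ε * deriv (deriv p₁) s) - 2 * (ε * deriv p₁ s) * (1 + ε * p₁ s') * Real.cos (s - s') + 2 * (1 + ε * p₁ s) * (1 + ε * p₁ s') * Real.sin (s - s') - 2 * (ε * deriv p₁ s) * (ε * deriv p₁ s') * Real.sin (s - s') - 2 * (1 + ε * p₁ s) * (ε * deriv p₁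 s') * Real.cos (s - s') + 2 * (ε * deriv (deriv p₁) s) * (1 + ε * p₁ s') * Real.sin (s - s') + 2 * (ε * deriv p₁ s) * (1 + ε * p₁ s') * Real.cos (s - s') - 2 * (ε * deriv (deriv p₁) s) * (ε * deriv p₁ s') * Real.cos (s - s') + 2 * (ε * deriv p₁ s) * (ε * deriv p₁ s') * Real.sin (s - s')) s :=
    myhasDerivF (fun x => 1 + ε * p₁ x) (fun x => ε * deriv p₁ x)
      (ε * deriv p₁ s) (ε * deriv (deriv p₁) s) s s'
      (1 + ε * p₁ s') (ε * deriv p₁ s') hf hg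
  have hBD' : HasDerivAt (fun x => (1 + ε * p₁ x) ^ 2 + (ε * deriv p₁ x) ^ 2 + (1 + ε * p₁ s') ^ 2 + (ε * deriv p₁ s') ^ 2 - 2 * (1 + ε * p₁ x) * (1 + ε * p₁ s') * Real.cos (x - s') - 2 * (1 + ε * p₁ x) * (ε * deriv p₁ s') * Real.sin (x - s') + 2 * (ε * deriv p₁ x) * (1 + ε * p₁ s') * Real.sin (x - s') - 2 * (ε * deriv p₁ x) * (ε * deriv p₁ s') * Real.cos (x - s')) (2 * (1 + ε * (p₁ s + deriv (deriv p₁) s)) * (ε * deriv p₁ s + (1 + ε * p₁ s') * Real.sin (s - s') - ε * deriv p₁ s' * Real.cos (s - s'))) s := by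
    have hDD : (2 * (1 + ε * (p₁ s + deriv (deriv p₁) s)) * (ε * deriv p₁ s + (1 + ε * p₁ s') * Real.sin (s - s') - ε * deriv p₁ s' * Real.cos (s - s'))) = (2 * (1 + ε * p₁ s) * (ε * deriv p₁ s) + 2 * (ε * deriv p₁ s) * (ε * deriv (deriv p₁) s) - 2 * (ε * deriv p₁ s) * (1 + ε * p₁ s') * Real.cos (s - s') + 2 * (1 + ε * p₁ s) * (1 + ε * p₁ s') * Real.sin (s - s') - 2 * (ε * deriv p₁ s) * (ε * deriv p₁ s') * Real.sin (s - s') - 2 * (1 + ε * p₁ s) * (ε * deriv p₁ s') * Real.cos (s - s') + 2 * (ε * deriv (deriv p₁) s) * (1 + ε * p₁ s') * Real.sin (s - s') + 2 * (ε * deriv p₁ s) * (1 + ε * p₁ s') * Real.cos (s - s') - 2 * (ε * deriv (deriv p₁) s) * (ε * deriv p₁ s') * Real.cos (s - s') + 2 * (ε * deriv p₁ s) * (ε * deriv p₁ s') * Real.sin (s - s')) := by ring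
    rw [hDD]
    exact hBD
  have hsqrt : HasDerivAt (fun x => Real.sqrt ((1 + ε * p₁ x) ^ 2 + (ε * deriv p₁ x) ^ 2 + (1 + ε * p₁ s') ^ 2 + (ε * deriv p₁ s') ^ 2 - 2 * (1 + ε * p₁ x) * (1 + ε * p₁ s') * Real.cos (x - s') - 2 * (1 + ε * p₁ x) * (ε * deriv p₁ s') * Real.sin (x - s') + 2 * (ε * deriv p₁ x) * (1 + ε * p₁ s') * Real.sin (x - s') - 2 * (ε * deriv p₁ x) * (ε * deriv p₁ s') * Real.cos (x - s')))
      (1 / (2 * Real.sqrt ((1 + ε * p₁ s) ^ 2 + (ε * deriv p₁ s) ^ 2 + (1 + ε * p₁ s') ^ 2 + (ε * deriv p₁ s') ^ 2 - 2 * (1 + ε * p₁ s) * (1 + ε * p₁ s') * Real.cos (s - s') - 2 * (1 + ε * p₁ s) * (ε * deriv p₁ s') * Real.sin (s - s') + 2 * (ε * deriv p₁ s) * (1 + ε * p₁ s') * Real.sin (s - s') - 2 * (ε * deriv p₁ s) * (ε * deriv p₁ s') * Real.cos (s - s'))) * (2 * (1 + ε * (p₁ s + deriv (deriv p₁) s))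 * (ε * deriv p₁ s + (1 + ε * p₁ s') * Real.sin (s - s') - ε * deriv p₁ s' * Real.cos (s - s')))) s :=
    (Real.hasDerivAt_sqrt hQne).comp s hBD'
  rw [hgf1, hgfun, hsqrt.deriv]
  have hsqne : Real.sqrt ((1 + ε * p₁ s) ^ 2 + (ε * deriv p₁ s) ^ 2 + (1 + ε * p₁ s') ^ 2 + (ε * deriv p₁ s') ^ 2 - 2 * (1 + ε * p₁ s) * (1 + ε * p₁ s') * Real.cos (s - s') - 2 * (1 + ε * p₁ s) * (ε * deriv p₁ s') * Real.sin (s - s') + 2 * (ε * deriv p₁ s) * (1 + ε * p₁ s') * Real.sin (s - s') - 2 * (ε * deriv p₁ s) * (ε * deriv p₁ s') * Real.cos (s - s')) ≠ 0 := ne_of_gt (Real.sqrt_pos.mpr hQpos)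
  have hgen : ∀ r q : ℝ, r ≠ 0 → 2 * r * (1 / (2 * r) * q) = q := by
    intro r q hr
    field_simp
  rw [hgen (Real.sqrt ((1 + ε * p₁ s) ^ 2 + (ε * deriv p₁ s) ^ 2 + (1 + ε * p₁ s') ^ 2 + (ε * deriv p₁ s') ^ 2 - 2 * (1 + ε * p₁ s) * (1 + ε * p₁ s') * Real.cos (s - s') - 2 * (1 + ε * p₁ s) * (ε * deriv p₁ s') * Real.sin (s - s') + 2 * (ε * deriv p₁ s) * (1 + ε * p₁ s') * Real.sin (s - s') - 2 * (ε * deriv p₁ s) * (ε * deriv p₁ s') * Real.cos (s - s'))) (2 * (1 + ε * (p₁ s + deriv (deriv p₁) s)) * (ε * deriv p₁ s + (1 + ε * p₁ s') * Real.sin (s - s') - ε * deriv p₁ s' * Real.cos (s - s'))) hsqne]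
  -- now the quantitative estimate
  have mylipB : ∀ (f : ℝ → ℝ), Differentiable ℝ f → (∀ x, |deriv f x| ≤ M) →
      ∀ x y B, |x - y| ≤ B → |f x - f y| ≤ M * B := by
    intro f hf hMf x y B hB
    refine (mylip f hf hMf x y).trans ?_
    have := mul_le_mul_of_nonneg_left hB (le_of_lt hMpos)
    linarith only [this]
  have hstB : |s - t| ≤ M * ε := by
    rw [show s - t = ε * v by rw [hsdef]; ring, abs_mul, abs_of_nonneg hε0]
    linarith only [mul_le_mul_of_nonneg_left hvM hε0]
  have hs'tB : |s' - (t + δ)| ≤ M * ε := by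
    rw [show s' - (t + δ) = ε * w by rw [hs'def]; ring, abs_mul, abs_of_nonneg hε0]
    linarith only [mul_le_mul_of_nonneg_left hwM hε0]
  have ha : |p₁ s - p₁ t| ≤ M * (M * ε) := mylipB p₁ hp1 hBp' s t (M * ε) hstB
  have ha' : |deriv p₁ s - deriv p₁ t| ≤ M * (M * ε) :=
    mylipB (deriv p₁) hdiff1 hBp'' s t (M * ε) hstB
  have ha'' : |deriv (deriv p₁) s - deriv (deriv p₁) t| ≤ M * (M * ε) :=
    mylipB (deriv (deriv p₁)) hdiff2 hBp''' s t (M * ε) hstB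
  have hb : |p₁ s' - p₁ (t + δ)| ≤ M * (M * ε) := mylipB p₁ hp1 hBp' s' (t + δ) (M * ε) hs'tB
  have hb' : |deriv p₁ s' - deriv p₁ (t + δ)| ≤ M * (M * ε) :=
    mylipB (deriv p₁) hdiff1 hBp'' s' (t + δ) (M * ε) hs'tB
  have hT : |Real.sin (s - s') - -Real.sin δ - ε * (v - w) * Real.cos δ| ≤ (ε * (v - w)) ^ 2 := by
    have hsmall : |ε * (v - w)| ≤ 1 := by
      rw [abs_mul, abs_of_nonneg hε0]
      linarith only [mul_le_mul_of_nonneg_left hvw hε0, hεM]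
    have h := mytaylor (-δ) (ε * (v - w)) hsmall
    rw [Real.sin_neg, Real.cos_neg, ← hds] at h
    exact h
  have hεabs : |ε| ≤ ε := le_of_eq (abs_of_nonneg hε0)
  have h2ε : |2 * ε| ≤ 2 * ε := le_of_eq (abs_of_nonneg (by linarith))
  -- the five error terms
  have hA1 : |2 * ε * (deriv p₁ s - deriv p₁ t)| ≤ 2 * M ^ 2 * ε ^ 2 := by
    have := myabsmul h2ε ha'
    calc |2 * ε * (deriv p₁ s - deriv p₁ t)| ≤ 2 * ε * (M * (M * ε)) := this
      _ = 2 * M ^ 2 * ε ^ 2 := by ring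
  have hA2 : |2 * (Real.sin (s - s') - -Real.sin δ - ε * (v - w) * Real.cos δ)| ≤ 8 * M ^ 2 * ε ^ 2 := by
    have h2 : |(2:ℝ)| ≤ 2 := by norm_num
    have := myabsmul h2 hT
    calc |2 * (Real.sin (s - s') - -Real.sin δ - ε * (v - w) * Real.cos δ)| ≤ 2 * (ε * (v - w)) ^ 2 := this
      _ ≤ 8 * M ^ 2 * ε ^ 2 := by
          have h1 := sq_le_sq' (abs_le.mp hvw).1 (abs_le.mp hvw).2
          have h2 := mul_le_mul_of_nonneg_left h1 (sq_nonneg ε)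
          linarith only [h2]
  have hA3 : |2 * ε * (p₁ s' * Real.sin (s - s') - p₁ (t + δ) * -Real.sin δ)| ≤ 6 * M ^ 2 * ε ^ 2 := by
    have hz : p₁ s' * Real.sin (s - s') - p₁ (t + δ) * -Real.sin δ
        = (p₁ s' - p₁ (t + δ)) * Real.sin (s - s')
          + p₁ (t + δ) * (Real.sin (s - s') - -Real.sin δ) := by ring
    have i1 : |(p₁ s' - p₁ (t + δ)) * Real.sin (s - s')| ≤ M * (M * ε) * 1 := myabsmul hb hS1
    have i2 : |p₁ (t + δ) * (Real.sin (s - s') - -Real.sin δ)| ≤ M * (2 * (M * ε)) :=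
      myabsmul (hBp (t + δ)) hS0
    have hZ : |p₁ s' * Real.sin (s - s') - p₁ (t + δ) * -Real.sin δ|
        ≤ M * (M * ε) * 1 + M * (2 * (M * ε)) := by
      rw [hz]
      exact (abs_add_le _ _).trans (add_le_add i1 i2)
    have := myabsmul h2ε hZ
    calc |2 * ε * (p₁ s' * Real.sin (s - s') - p₁ (t + δ) * -Real.sin δ)| ≤ 2 * ε * (M * (M * ε) * 1 + M * (2 * (M * ε))) := this
      _ = 6 * M ^ 2 * ε ^ 2 := by ring
  have hA4 : |-(2 * ε * (deriv p₁ s' * Real.cos (s - s') - deriv p₁ (t + δ) * Real.cos δ))| ≤ 6 * M ^ 2 * ε ^ 2 := by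
    rw [abs_neg]
    have hz : deriv p₁ s' * Real.cos (s - s') - deriv p₁ (t + δ) * Real.cos δ
        = (deriv p₁ s' - deriv p₁ (t + δ)) * Real.cos (s - s')
          + deriv p₁ (t + δ) * (Real.cos (s - s') - Real.cos δ) := by ring
    have i1 : |(deriv p₁ s' - deriv p₁ (t + δ)) * Real.cos (s - s')| ≤ M * (M * ε) * 1 :=
      myabsmul hb' hC1
    have i2 : |deriv p₁ (t + δ) * (Real.cos (s - s') - Real.cos δ)| ≤ M * (2 * (M * ε)) :=
      myabsmul (hBp' (t + δ)) hC0
    have hZ : |deriv p₁ s' * Real.cos (s - s') - deriv p₁ (t + δ) * Real.cos δ|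
        ≤ M * (M * ε) * 1 + M * (2 * (M * ε)) := by
      rw [hz]
      exact (abs_add_le _ _).trans (add_le_add i1 i2)
    have := myabsmul h2ε hZ
    calc |2 * ε * (deriv p₁ s' * Real.cos (s - s') - deriv p₁ (t + δ) * Real.cos δ)|
        ≤ 2 * ε * (M * (M * ε) * 1 + M * (2 * (M * ε))) := this
      _ = 6 * M ^ 2 * ε ^ 2 := by ring
  have hA5 : |2 * ε * (ε * ((p₁ s + deriv (deriv p₁) s) * deriv p₁ s) + ε * ((p₁ s + deriv (deriv p₁) s) * (p₁ s' * Real.sin (s - s'))) - ε * ((p₁ s + deriv (deriv p₁) s) * (deriv p₁ s' * Real.cos (s - s'))) + (p₁ s + deriv (deriv p₁) s) * Real.sin (s - s') - (p₁ t + deriv (deriv p₁) t) * Real.sin (s - s') + (p₁ t + deriv (deriv p₁) t) * (Real.sin (s - s') - -Real.sin δ))| ≤ 24 * M ^ 2 * ε ^ 2 := by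
    have hα : |p₁ s + deriv (deriv p₁) s| ≤ 2 * M := by
      have := abs_add_le (p₁ s) (deriv (deriv p₁) s)
      have h1 := hBp s
      have h2 := hBp'' s
      linarith only [this, h1, h2]
    have hα0 : |p₁ t + deriv (deriv p₁) t| ≤ 2 * M := by
      have := abs_add_le (p₁ t) (deriv (deriv p₁) t)
      have h1 := hBp t
      have h2 := hBp'' t
      linarith only [this, h1, h2]
    have i1 : |ε * ((p₁ s + deriv (deriv p₁) s) * deriv p₁ s)| ≤ ε * (2 * M * M) :=
      myabsmul hεabs (myabsmul hα (hBp' s))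
    have i2 : |ε * ((p₁ s + deriv (deriv p₁) s) * (p₁ s' * Real.sin (s - s')))|
        ≤ ε * (2 * M * (M * 1)) :=
      myabsmul hεabs (myabsmul hα (myabsmul (hBp s') hS1))
    have i3 : |ε * ((p₁ s + deriv (deriv p₁) s) * (deriv p₁ s' * Real.cos (s - s')))|
        ≤ ε * (2 * M * (M * 1)) :=
      myabsmul hεabs (myabsmul hα (myabsmul (hBp' s') hC1))
    have i4 : |(p₁ s + deriv (deriv p₁) s) * Real.sin (s - s')
        - (p₁ t + deriv (deriv p₁) t) * Real.sin (s - s')| ≤ (M * (M * ε) + M * (M * ε)) * 1 := by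
      rw [show (p₁ s + deriv (deriv p₁) s) * Real.sin (s - s')
          - (p₁ t + deriv (deriv p₁) t) * Real.sin (s - s')
          = ((p₁ s - p₁ t) + (deriv (deriv p₁) s - deriv (deriv p₁) t)) * Real.sin (s - s')
          from by ring]
      refine myabsmul ?_ hS1
      exact (abs_add_le _ _).trans (add_le_add ha ha'')
    have i5 : |(p₁ t + deriv (deriv p₁) t) * (Real.sin (s - s') - -Real.sin δ)|
        ≤ 2 * M * (2 * (M * ε)) := myabsmul hα0 hS0
    have hZ : |ε * ((p₁ s + deriv (deriv p₁) s) * deriv p₁ s)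
        + ε * ((p₁ s + deriv (deriv p₁) s) * (p₁ s' * Real.sin (s - s')))
        - ε * ((p₁ s + deriv (deriv p₁) s) * (deriv p₁ s' * Real.cos (s - s')))
        + (p₁ s + deriv (deriv p₁) s) * Real.sin (s - s')
        - (p₁ t + deriv (deriv p₁) t) * Real.sin (s - s')
        + (p₁ t + deriv (deriv p₁) t) * (Real.sin (s - s') - -Real.sin δ)|
        ≤ ε * (2 * M * M) + ε * (2 * M * (M * 1)) + ε * (2 * M * (M * 1))
          + (M * (M * ε) + M * (M * ε)) * 1 + 2 * M * (2 * (M * ε)) := by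
      rw [show ε * ((p₁ s + deriv (deriv p₁) s) * deriv p₁ s)
          + ε * ((p₁ s + deriv (deriv p₁) s) * (p₁ s' * Real.sin (s - s')))
          - ε * ((p₁ s + deriv (deriv p₁) s) * (deriv p₁ s' * Real.cos (s - s')))
          + (p₁ s + deriv (deriv p₁) s) * Real.sin (s - s')
          - (p₁ t + deriv (deriv p₁) t) * Real.sin (s - s')
          + (p₁ t + deriv (deriv p₁) t) * (Real.sin (s - s') - -Real.sin δ)
          = (ε * ((p₁ s + deriv (deriv p₁) s) * deriv p₁ s)
            + ε * ((p₁ s + deriv (deriv p₁) s) * (p₁ s' * Real.sin (s - s')))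
            - ε * ((p₁ s + deriv (deriv p₁) s) * (deriv p₁ s' * Real.cos (s - s'))))
          + ((p₁ s + deriv (deriv p₁) s) * Real.sin (s - s')
            - (p₁ t + deriv (deriv p₁) t) * Real.sin (s - s'))
          + (p₁ t + deriv (deriv p₁) t) * (Real.sin (s - s') - -Real.sin δ) from by ring]
      have j0 : |ε * ((p₁ s + deriv (deriv p₁) s) * deriv p₁ s)
          + ε * ((p₁ s + deriv (deriv p₁) s) * (p₁ s' * Real.sin (s - s')))
          - ε * ((p₁ s + deriv (deriv p₁) s) * (deriv p₁ s' * Real.cos (s - s')))|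
          ≤ ε * (2 * M * M) + ε * (2 * M * (M * 1)) + ε * (2 * M * (M * 1)) := by
        have u1 := abs_add_le (ε * ((p₁ s + deriv (deriv p₁) s) * deriv p₁ s))
          (ε * ((p₁ s + deriv (deriv p₁) s) * (p₁ s' * Real.sin (s - s'))))
        have u2 := abs_sub (ε * ((p₁ s + deriv (deriv p₁) s) * deriv p₁ s)
          + ε * ((p₁ s + deriv (deriv p₁) s) * (p₁ s' * Real.sin (s - s'))))
          (ε * ((p₁ s + deriv (deriv p₁) s) * (deriv p₁ s' * Real.cos (s - s'))))
        linarith only [u1, u2, i1, i2, i3]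
      have j1 := abs_add_le (ε * ((p₁ s + deriv (deriv p₁) s) * deriv p₁ s)
          + ε * ((p₁ s + deriv (deriv p₁) s) * (p₁ s' * Real.sin (s - s')))
          - ε * ((p₁ s + deriv (deriv p₁) s) * (deriv p₁ s' * Real.cos (s - s'))))
          ((p₁ s + deriv (deriv p₁) s) * Real.sin (s - s')
            - (p₁ t + deriv (deriv p₁) t) * Real.sin (s - s'))
      have j2 := abs_add_le ((ε * ((p₁ s + deriv (deriv p₁) s) * deriv p₁ s)
          + ε * ((p₁ s + deriv (deriv p₁) s) * (p₁ s' * Real.sin (s - s')))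
          - ε * ((p₁ s + deriv (deriv p₁) s) * (deriv p₁ s' * Real.cos (s - s'))))
          + ((p₁ s + deriv (deriv p₁) s) * Real.sin (s - s')
            - (p₁ t + deriv (deriv p₁) t) * Real.sin (s - s')))
          ((p₁ t + deriv (deriv p₁) t) * (Real.sin (s - s') - -Real.sin δ))
      linarith only [j0, j1, j2, i4, i5]
    have := myabsmul h2ε hZ
    calc |2 * ε * (ε * ((p₁ s + deriv (deriv p₁) s) * deriv p₁ s) + ε * ((p₁ s + deriv (deriv p₁) s) * (p₁ s' * Real.sin (s - s'))) - ε * ((p₁ s + deriv (deriv p₁) s) * (deriv p₁ s' * Real.cos (s - s'))) + (p₁ s + deriv (deriv p₁) s) * Real.sin (s - s') - (p₁ t + deriv (deriv p₁) t) * Real.sin (s - s') + (p₁ t + deriv (deriv p₁) t) * (Real.sin (s - s') - -Real.sin δ))| ≤ 2 * ε * (ε * (2 * M * M) + ε * (2 * M * (M * 1)) + ε * (2 * M * (M * 1))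
          + (M * (M * ε) + M * (M * ε)) * 1 + 2 * M * (2 * (M * ε))) := this
      _ = 24 * M ^ 2 * ε ^ 2 := by ring
  have hdec : (2 * (1 + ε * (p₁ s + deriv (deriv p₁) s)) * (ε * deriv p₁ s + (1 + ε * p₁ s') * Real.sin (s - s') - ε * deriv p₁ s' * Real.cos (s - s'))) - (-2 * Real.sin δ + 2 * ε * (deriv p₁ t - deriv p₁ (t + δ) * Real.cos δ + (v - w) * Real.cos δ - (p₁ (t + δ) + p₁ t + deriv (deriv p₁) t) * Real.sin δ)) = (2 * ε * (deriv p₁ s - deriv p₁ t)) + (2 * (Real.sin (s - s') - -Real.sin δ - ε * (v - w) * Real.cos δ)) + (2 * ε * (p₁ s' * Real.sin (s - s') - p₁ (t + δ) * -Real.sin δ)) + (-(2 * ε * (deriv p₁ s' * Real.cos (s - s') - deriv p₁ (t + δ) * Real.cos δ))) + (2 * ε * (ε * ((p₁ s + deriv (deriv p₁) s) * deriv p₁ s) + ε * ((p₁ s + deriv (deriv p₁) s) * (p₁ s' * Real.sin (s - s'))) - ε * ((p₁ s + deriv (deriv p₁) s) * (deriv p₁ s' * Real.cos (s - s'))) +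 (p₁ s + deriv (deriv p₁) s) * Real.sin (s - s') - (p₁ t + deriv (deriv p₁) t) * Real.sin (s - s') + (p₁ t + deriv (deriv p₁) t) * (Real.sin (s - s') - -Real.sin δ))) := by ring
  calc |(2 * (1 + ε * (p₁ s + deriv (deriv p₁) s)) * (ε * deriv p₁ s + (1 + ε * p₁ s') * Real.sin (s - s') - ε * deriv p₁ s' * Real.cos (s - s'))) - (-2 * Real.sin δ + 2 * ε * (deriv p₁ t - deriv p₁ (t + δ) * Real.cos δ + (v - w) * Real.cos δ - (p₁ (t + δ) + p₁ t + deriv (deriv p₁) t) * Real.sin δ))|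
      = |(2 * ε * (deriv p₁ s - deriv p₁ t)) + (2 * (Real.sin (s - s') - -Real.sin δ - ε * (v - w) * Real.cos δ)) + (2 * ε * (p₁ s' * Real.sin (s - s') - p₁ (t + δ) * -Real.sin δ)) + (-(2 * ε * (deriv p₁ s' * Real.cos (s - s') - deriv p₁ (t + δ) * Real.cos δ))) + (2 * ε * (ε * ((p₁ s + deriv (deriv p₁) s) * deriv p₁ s) + ε * ((p₁ s + deriv (deriv p₁) s) * (p₁ s' * Real.sin (s - s'))) - ε * ((p₁ s + deriv (deriv p₁) s) * (deriv p₁ s' * Real.cos (s - s'))) + (p₁ s + deriv (deriv p₁) s) * Real.sin (s - s') - (p₁ t + deriv (deriv p₁) t) * Real.sin (s - s') + (p₁ t + deriv (deriv p₁) t) * (Real.sin (s - s') - -Real.sin δ)))| := by rw [hdec]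
    _ ≤ |(2 * ε * (deriv p₁ s - deriv p₁ t)) + (2 * (Real.sin (s - s') - -Real.sin δ - ε * (v - w) * Real.cos δ)) + (2 * ε * (p₁ s' * Real.sin (s - s') - p₁ (t + δ) * -Real.sin δ)) + (-(2 * ε * (deriv p₁ s' * Real.cos (s - s') - deriv p₁ (t + δ) * Real.cos δ)))| + |2 * ε * (ε * ((p₁ s + deriv (deriv p₁) s) * deriv p₁ s) + ε * ((p₁ s + deriv (deriv p₁) s) * (p₁ s' * Real.sin (s - s'))) - ε * ((p₁ s + deriv (deriv p₁) s) * (deriv p₁ s' * Real.cos (s - s'))) + (p₁ s + deriv (deriv p₁) s) * Real.sin (s - s') - (p₁ t + deriv (deriv p₁) t) * Real.sin (s - s') + (p₁ t + deriv (deriv p₁) t) * (Real.sin (s - s') - -Real.sin δ))| := abs_add_le _ _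
    _ ≤ (|(2 * ε * (deriv p₁ s - deriv p₁ t)) + (2 * (Real.sin (s - s') - -Real.sin δ - ε * (v - w) * Real.cos δ)) + (2 * ε * (p₁ s' * Real.sin (s - s') - p₁ (t + δ) * -Real.sin δ))| + |-(2 * ε * (deriv p₁ s' * Real.cos (s - s') - deriv p₁ (t + δ) * Real.cos δ))|) + |2 * ε * (ε * ((p₁ s + deriv (deriv p₁) s) * deriv p₁ s) + ε * ((p₁ s + deriv (deriv p₁) s) * (p₁ s' * Real.sin (s - s'))) - ε * ((p₁ s + deriv (deriv p₁) s) * (deriv p₁ s' * Real.cos (s - s'))) + (p₁ s + deriv (deriv p₁) s) * Real.sin (s - s') - (p₁ t + deriv (deriv p₁) t) * Real.sin (s - s') + (p₁ t + deriv (deriv p₁) t) * (Real.sin (s - s') - -Real.sin δ))| := by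
        gcongr
        exact abs_add_le _ _
    _ ≤ ((|(2 * ε * (deriv p₁ s - deriv p₁ t)) + (2 * (Real.sin (s - s') - -Real.sin δ - ε * (v - w) * Real.cos δ))| + |2 * ε * (p₁ s' * Real.sin (s - s') - p₁ (t + δ) * -Real.sin δ)|) + |-(2 * ε * (deriv p₁ s' * Real.cos (s - s') - deriv p₁ (t + δ) * Real.cos δ))|) + |2 * ε * (ε * ((p₁ s + deriv (deriv p₁) s) * deriv p₁ s) + ε * ((p₁ s + deriv (deriv p₁) s) * (p₁ s' * Real.sin (s - s'))) - ε * ((p₁ s + deriv (deriv p₁) s) * (deriv p₁ s' * Real.cos (s - s'))) + (p₁ s + deriv (deriv p₁) s) * Real.sin (s - s') - (p₁ t + deriv (deriv p₁) t) * Real.sin (s - s') + (p₁ t + deriv (deriv p₁) t) * (Real.sin (s - s') - -Real.sin δ))| := by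
        gcongr
        exact abs_add_le _ _
    _ ≤ (((|2 * ε * (deriv p₁ s - deriv p₁ t)| + |2 * (Real.sin (s - s') - -Real.sin δ - ε * (v - w) * Real.cos δ)|) + |2 * ε * (p₁ s' * Real.sin (s - s') - p₁ (t + δ) * -Real.sin δ)|) + |-(2 * ε * (deriv p₁ s' * Real.cos (s - s') - deriv p₁ (t + δ) * Real.cos δ))|) + |2 * ε * (ε * ((p₁ s + deriv (deriv p₁) s) * deriv p₁ s) + ε * ((p₁ s + deriv (deriv p₁) s) * (p₁ s' * Real.sin (s - s'))) - ε * ((p₁ s + deriv (deriv p₁) s) * (deriv p₁ s' * Real.cos (s - s'))) + (p₁ s + deriv (deriv p₁) s) * Real.sin (s - s') - (p₁ t + deriv (deriv p₁) t) * Real.sin (s - s') + (p₁ t + deriv (deriv p₁) t) * (Real.sin (s - s') - -Real.sin δ))| := by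
        gcongr
        exact abs_add_le _ _
    _ ≤ 50 * M ^ 2 * ε ^ 2 := by
        have hpos : (0:ℝ) ≤ M ^ 2 * ε ^ 2 := by positivity
        linarith only [hA1, hA2, hA3, hA4, hA5, hpos]
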